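/- Let S = {1,…,N} with its standard order, C0 the successor cyclic permutation, and (C, Γ1, Γ2) an associative BD-structure on S with α0 = (N,1) ∉ Γ2. For k ≥ 1 let P(k) ⊆ P_1 be the domain of τ^k, and set P(k)^+ = {(i,j) ∈ P(k) : i < j} and P(k)^− = {(i,j) ∈ P(k) : i > j}. Then for all i1, i2, i3 ∈ S and all k ≥ 1: (1) [(i1,i3) ∈ P(k)^− and i1 < i2] holds if and only if [(i1,i2) ∈ P(k)^+ and (i2,i3) ∈ P(k)^−]; (2) [(i1,i3) ∈ P(k)^− and i2 < i3] holds if and only if [(i1,i2) ∈ P(k)^− and (i2,i3) ∈ P(k)^+]. -/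

import Mathlib

noncomputable section

variable {S : Type}

/-- Membership in `P_ι` (for `Γ = Γ_ι ⊆ Γ_{C0}`): pairs `(s, C0^m s)`, `m ≥ 1`, all of whose
intermediate edges lie in `Γ`. -/
def inP (C0 : Equiv.Perm S) (Γ : Set (S × S)) (p : S × S) : Prop :=
  ∃ m : ℕ, 1 ≤ m ∧ p.2 = (C0 ^ m) p.1 ∧
    ∀ j : ℕ, j < m → ((C0 ^ j) p.1, (C0 ^ (j + 1)) p.1) ∈ Γ

/-- `τ^k` is defined at `p` (i.e. `p ∈ P(k)`): `(C×C)^l p ∈ P_1` for all `0 ≤ l ≤ k-1`. -/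
def tauDef (C0 C : Equiv.Perm S) (Γ1 : Set (S × S)) (k : ℕ) (p : S × S) : Prop :=
  ∀ l : ℕ, l < k → inP C0 Γ1 ((C ^ l) p.1, (C ^ l) p.2)

/-- The successor cyclic permutation `C0` of `Fin N`. -/
def C0std (N : ℕ) [NeZero N] : Equiv.Perm (Fin N) := Equiv.addRight (1 : Fin N)

/-- `α0 = (N, 1)`, i.e. `(max, min)` of `Fin N`. -/
def alpha0 (N : ℕ) [NeZero N] : Fin N × Fin N := ((0 - 1 : Fin N), (0 : Fin N))

namespace Stmt12Aux

open Fin.NatCast Fin.CommRing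

variable {N : ℕ} [NeZero N]

lemma C0_apply (x : Fin N) : C0std N x = x + 1 := rfl

lemma C0_pow_apply (j : ℕ) (x : Fin N) : (C0std N ^ j) x = x + (j : Fin N) := by
  induction j with
  | zero => simp
  | succ j ih => rw [pow_succ', Equiv.Perm.mul_apply, ih, C0_apply]; push_cast; ring

lemma val_addm (a : Fin N) (m : ℕ) : ((a + (m : Fin N)).val = (a.val + m) % N) := by
  simp [Fin.add_def, Fin.val_natCast, Nat.add_mod_mod]

lemma eq_add_of_val {a b : Fin N} {m : ℕ} (_hm : m < N)
    (h : b.val = a.val + m ∨ b.val + N = a.val + m) : b = a + (m : Fin N) := by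
  apply Fin.ext
  rw [val_addm]
  rcases h with h | h
  · rw [← h, Nat.mod_eq_of_lt b.isLt]
  · have e : a.val + m = b.val + N := h.symm
    rw [e, Nat.add_mod_right, Nat.mod_eq_of_lt b.isLt]

lemma val_add_cases {a b : Fin N} {m : ℕ} (hm : m < N) (h : b = a + (m : Fin N)) :
    b.val = a.val + m ∨ b.val + N = a.val + m := by
  have hb : b.val = (a.val + m) % N := by rw [h, val_addm]
  rcases Nat.lt_or_ge (a.val + m) N with h' | h'
  · left; rw [hb, Nat.mod_eq_of_lt h']
  · right
    have h2 : (a.val + m) % N = a.val + m - N := by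
      rw [Nat.mod_eq_sub_mod h', Nat.mod_eq_of_lt (by have := a.isLt; omega)]
    omega

lemma fin_cancel {a : Fin N} {m m' : ℕ} (hm : m < N) (hm' : m' < N)
    (h : a + (m : Fin N) = a + (m' : Fin N)) : m = m' := by
  have h2 := congrArg Fin.val (add_left_cancel h)
  rwa [Fin.val_natCast, Fin.val_natCast, Nat.mod_eq_of_lt hm, Nat.mod_eq_of_lt hm'] at h2

/-- A `Γ`-path of length `m` starting at `a`. -/
def pathP (Γ : Set (Fin N × Fin N)) (a : Fin N) (m : ℕ) : Prop :=
  ∀ j : ℕ, j < m → (a + (j : Fin N), a + (j : Fin N) + 1) ∈ Γ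

lemma inP_iff (Γ : Set (Fin N × Fin N)) (a b : Fin N) :
    inP (C0std N) Γ (a, b) ↔ ∃ m : ℕ, 1 ≤ m ∧ b = a + (m : Fin N) ∧ pathP Γ a m := by
  unfold inP pathP
  simp only [C0_pow_apply, Nat.cast_add, Nat.cast_one, add_assoc]

lemma pathP_lt {Γ : Set (Fin N × Fin N)}
    (hΓ : Γ ⊂ {p : Fin N × Fin N | p.2 = C0std N p.1}) {a : Fin N} {m : ℕ}
    (_hm : 1 ≤ m) (hp : pathP Γ a m) : m < N := by
  by_contra h
  push_neg at h
  apply hΓ.2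
  rintro ⟨x, y⟩ hxy
  simp only [Set.mem_setOf_eq, C0_apply] at hxy
  have hjN : (N + x.val - a.val) % N < N := Nat.mod_lt _ (Nat.pos_of_ne_zero (NeZero.ne N))
  have hax : a + (((N + x.val - a.val) % N : ℕ) : Fin N) = x := by
    apply Fin.ext
    rw [val_addm, Nat.add_mod_mod]
    have e : a.val + (N + x.val - a.val) = N + x.val := by have := a.isLt; omega
    rw [e, Nat.add_mod_left, Nat.mod_eq_of_lt x.isLt]
  have h2 := hp _ (lt_of_lt_of_le hjN h)
  rw [hax] at h2
  rwa [hxy]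

lemma pathP_mono {Γ : Set (Fin N × Fin N)} {a : Fin N} {m m' : ℕ} (h : m' ≤ m)
    (hp : pathP Γ a m) : pathP Γ a m' := fun j hj => hp j (lt_of_lt_of_le hj h)

lemma pathP_shift {Γ : Set (Fin N × Fin N)} {a : Fin N} {m s t : ℕ}
    (hp : pathP Γ a m) (h : s + t ≤ m) : pathP Γ (a + (s : Fin N)) t := by
  intro j hj
  have h2 := hp (s + j) (by omega)
  have e : a + ((s + j : ℕ) : Fin N) = a + (s : Fin N) + (j : Fin N) := by push_cast; ring
  rwa [e] at h2

lemma pathP_concat {Γ : Set (Fin N × Fin N)} {a : Fin N} {m1 m2 : ℕ}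
    (h1 : pathP Γ a m1) (h2 : pathP Γ (a + (m1 : Fin N)) m2) : pathP Γ a (m1 + m2) := by
  intro j hj
  rcases Nat.lt_or_ge j m1 with h | h
  · exact h1 j h
  · have h3 := h2 (j - m1) (by omega)
    have e : a + (m1 : Fin N) + ((j - m1 : ℕ) : Fin N) = a + (j : Fin N) := by
      rw [add_assoc, ← Nat.cast_add, Nat.add_sub_cancel' h]
    rwa [e] at h3

variable {Γ1 : Set (Fin N × Fin N)} {C : Equiv.Perm (Fin N)}

lemma inP_extract (hΓ1 : Γ1 ⊂ {p : Fin N × Fin N | p.2 = C0std N p.1}) {a b : Fin N}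
    (h : inP (C0std N) Γ1 (a, b)) :
    ∃ m : ℕ, 1 ≤ m ∧ m < N ∧ b = a + (m : Fin N) ∧ pathP Γ1 a m := by
  obtain ⟨m, h1, h2, h3⟩ := (inP_iff Γ1 a b).1 h
  exact ⟨m, h1, pathP_lt hΓ1 h1 h3, h2, h3⟩

lemma transport (hstep : ∀ x : Fin N, (x, x + 1) ∈ Γ1 → C (x + 1) = C x + 1)
    {a : Fin N} {m : ℕ} (hp : pathP Γ1 a m) :
    ∀ j : ℕ, j ≤ m → C (a + (j : Fin N)) = C a + (j : Fin N) := by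
  intro j
  induction j with
  | zero => simp
  | succ j ih =>
    intro hj
    have hij := ih (by omega)
    have hedge := hstep _ (hp j (by omega))
    have e : a + ((j + 1 : ℕ) : Fin N) = a + (j : Fin N) + 1 := by push_cast; ring
    have e2 : C a + ((j + 1 : ℕ) : Fin N) = C a + (j : Fin N) + 1 := by push_cast; ring
    rw [e, hedge, hij, e2]

lemma levels (hΓ1 : Γ1 ⊂ {p : Fin N × Fin N | p.2 = C0std N p.1})
    (hstep : ∀ x : Fin N, (x, x + 1) ∈ Γ1 → C (x + 1) = C x + 1)
    {a c : Fin N} {m : ℕ} (_hm1 : 1 ≤ m) (hmN : m < N) (hc : c = a + (m : Fin N))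
    {k : ℕ} (H : ∀ l, l < k → inP (C0std N) Γ1 ((C ^ l) a, (C ^ l) c)) :
    ∀ l, l < k → ((C ^ l) c = (C ^ l) a + (m : Fin N) ∧ pathP Γ1 ((C ^ l) a) m ∧
      ∀ j : ℕ, j ≤ m → (C ^ l) (a + (j : Fin N)) = (C ^ l) a + (j : Fin N)) := by
  have extract : ∀ l, l < k → (C ^ l) c = (C ^ l) a + (m : Fin N) →
      pathP Γ1 ((C ^ l) a) m := by
    intro l hl he
    obtain ⟨ml, h1, h2, h3, h4⟩ := inP_extract hΓ1 (H l hl)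
    have e : ml = m := fin_cancel h2 hmN (h3 ▸ he)
    exact e ▸ h4
  intro l
  induction l with
  | zero =>
    intro hl
    simp only [pow_zero, Equiv.Perm.one_apply]
    refine ⟨hc, extract 0 hl (by simpa using hc), ?_⟩ <;> simp
  | succ l ih =>
    intro hl
    obtain ⟨he, hp, hpt⟩ := ih (by omega)
    have hpow : ∀ x : Fin N, (C ^ (l + 1)) x = C ((C ^ l) x) := by
      intro x; rw [pow_succ', Equiv.Perm.mul_apply]
    have he' : (C ^ (l + 1)) c = (C ^ (l + 1)) a + (m : Fin N) := by
      rw [hpow, hpow, he, transport hstep hp m le_rfl]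
    refine ⟨he', extract _ hl he', ?_⟩
    intro j hj
    rw [hpow, hpow, hpt j hj, transport hstep hp j hj]

lemma tau_split (hΓ1 : Γ1 ⊂ {p : Fin N × Fin N | p.2 = C0std N p.1})
    (hstep : ∀ x : Fin N, (x, x + 1) ∈ Γ1 → C (x + 1) = C x + 1)
    {a b c : Fin N} {m m' : ℕ} (hm1 : 1 ≤ m) (hmN : m < N) (hc : c = a + (m : Fin N))
    (hm'1 : 1 ≤ m') (hm'm : m' < m) (hb : b = a + (m' : Fin N))
    {k : ℕ} (H : tauDef (C0std N) C Γ1 k (a, c)) :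
    tauDef (C0std N) C Γ1 k (a, b) ∧ tauDef (C0std N) C Γ1 k (b, c) := by
  have L := levels hΓ1 hstep hm1 hmN hc (fun l hl => H l hl)
  constructor
  · intro l hl
    obtain ⟨he, hp, hpt⟩ := L l hl
    refine (inP_iff _ _ _).2 ⟨m', hm'1, ?_, pathP_mono (le_of_lt hm'm) hp⟩
    rw [hb, hpt m' (le_of_lt hm'm)]
  · intro l hl
    obtain ⟨he, hp, hpt⟩ := L l hl
    refine (inP_iff _ _ _).2 ⟨m - m', by omega, ?_, ?_⟩
    · rw [hb, hpt m' (le_of_lt hm'm), he, add_assoc, ← Nat.cast_add,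
        Nat.add_sub_cancel' (le_of_lt hm'm)]
    · rw [hb, hpt m' (le_of_lt hm'm)]
      exact pathP_shift hp (by omega)

lemma tau_concat {a b c : Fin N} {k : ℕ}
    (H1 : tauDef (C0std N) C Γ1 k (a, b)) (H2 : tauDef (C0std N) C Γ1 k (b, c)) :
    tauDef (C0std N) C Γ1 k (a, c) := by
  intro l hl
  obtain ⟨m1, h11, h12, h13⟩ := (inP_iff _ _ _).1 (H1 l hl)
  obtain ⟨m2, h21, h22, h23⟩ := (inP_iff _ _ _).1 (H2 l hl)
  refine (inP_iff _ _ _).2 ⟨m1 + m2, by omega, ?_, pathP_concat h13 (h12 ▸ h23)⟩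
  rw [h22, h12, add_assoc, ← Nat.cast_add]

end Stmt12Aux

open Stmt12Aux Fin.NatCast Fin.CommRing in
/-- Lemma `comb-lem1`: for an associative BD-structure on `{1,…,N}` with
`α0 ∉ Γ2`, membership of a triple in `P(k)^±` decomposes as stated. -/
theorem stmt12 (N : ℕ) [NeZero N]
    (C : Equiv.Perm (Fin N))
    (hC : ∀ s t : Fin N, ∃ k : ℕ, (C ^ k) s = t)
    (Γ1 Γ2 : Set (Fin N × Fin N))
    (hΓ1 : Γ1 ⊂ {p : Fin N × Fin N | p.2 = C0std N p.1})
    (hΓ2 : Γ2 ⊂ {p : Fin N × Fin N | p.2 = C0std N p.1})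
    (hmap : (fun p : Fin N × Fin N => (C p.1, C p.2)) '' Γ1 = Γ2)
    (hα0 : alpha0 N ∉ Γ2) :
    ∀ (i1 i2 i3 : Fin N) (k : ℕ), 1 ≤ k →
      (((tauDef (C0std N) C Γ1 k (i1, i3) ∧ i3 < i1) ∧ i1 < i2)
        ↔ ((tauDef (C0std N) C Γ1 k (i1, i2) ∧ i1 < i2)
            ∧ (tauDef (C0std N) C Γ1 k (i2, i3) ∧ i3 < i2)))
      ∧ (((tauDef (C0std N) C Γ1 k (i1, i3) ∧ i3 < i1) ∧ i2 < i3)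
        ↔ ((tauDef (C0std N) C Γ1 k (i1, i2) ∧ i2 < i1)
            ∧ (tauDef (C0std N) C Γ1 k (i2, i3) ∧ i2 < i3))) := by
  have hstep : ∀ x : Fin N, (x, x + 1) ∈ Γ1 → C (x + 1) = C x + 1 := by
    intro x hx
    have h2 : (C x, C (x + 1)) ∈ Γ2 := by
      rw [← hmap]; exact ⟨(x, x + 1), hx, rfl⟩
    simpa [C0_apply] using hΓ2.1 h2
  intro i1 i2 i3 k hk
  have ext0 : ∀ {a b : Fin N}, tauDef (C0std N) C Γ1 k (a, b) →
      ∃ m : ℕ, 1 ≤ m ∧ m < N ∧ b = a + (m : Fin N) ∧ pathP Γ1 a m := by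
    intro a b H
    have h := H 0 (by omega)
    simp only [pow_zero, Equiv.Perm.one_apply] at h
    exact inP_extract hΓ1 h
  have hi1 := i1.isLt; have hi2 := i2.isLt; have hi3 := i3.isLt
  constructor
  · constructor
    · rintro ⟨⟨H13, h31⟩, h12⟩
      obtain ⟨m, hm1, hmN, hc, hp⟩ := ext0 H13
      rw [Fin.lt_def] at h31 h12
      rcases val_add_cases hmN hc with h | h
      · exfalso; omega
      · have hb : i2 = i1 + ((i2.val - i1.val : ℕ) : Fin N) :=
          eq_add_of_val (by omega) (Or.inl (by omega))
        have key := tau_split hΓ1 hstep hm1 hmN hc (by omega) (by omega) hb H13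
        exact ⟨⟨key.1, Fin.lt_def.2 h12⟩, key.2, Fin.lt_def.2 (by omega)⟩
    · rintro ⟨⟨H12, h12⟩, H23, h32⟩
      obtain ⟨m1, hm11, hm1N, hc1, hp1⟩ := ext0 H12
      obtain ⟨m2, hm21, hm2N, hc2, hp2⟩ := ext0 H23
      have hsum : m1 + m2 < N :=
        pathP_lt hΓ1 (by omega) (pathP_concat hp1 (hc1 ▸ hp2))
      rw [Fin.lt_def] at h12 h32
      have hA := val_add_cases hm1N hc1
      have hB := val_add_cases hm2N hc2
      have h31 : i3.val < i1.val := by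
        rcases hA with h | h <;> rcases hB with h' | h' <;> omega
      exact ⟨⟨tau_concat H12 H23, Fin.lt_def.2 h31⟩, Fin.lt_def.2 h12⟩
  · constructor
    · rintro ⟨⟨H13, h31⟩, h23⟩
      obtain ⟨m, hm1, hmN, hc, hp⟩ := ext0 H13
      rw [Fin.lt_def] at h31 h23
      rcases val_add_cases hmN hc with h | h
      · exfalso; omega
      · have hb : i2 = i1 + ((N + i2.val - i1.val : ℕ) : Fin N) :=
          eq_add_of_val (by omega) (Or.inr (by omega))
        have key := tau_split hΓ1 hstep hm1 hmN hc (by omega) (by omega) hb H13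
        exact ⟨⟨key.1, Fin.lt_def.2 (by omega)⟩, key.2, Fin.lt_def.2 h23⟩
    · rintro ⟨⟨H12, h21⟩, H23, h23⟩
      obtain ⟨m1, hm11, hm1N, hc1, hp1⟩ := ext0 H12
      obtain ⟨m2, hm21, hm2N, hc2, hp2⟩ := ext0 H23
      have hsum : m1 + m2 < N :=
        pathP_lt hΓ1 (by omega) (pathP_concat hp1 (hc1 ▸ hp2))
      rw [Fin.lt_def] at h21 h23
      have hA := val_add_cases hm1N hc1
      have hB := val_add_cases hm2N hc2
      have h31 : i3.val < i1.val := by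
        rcases hA with h | h <;> rcases hB with h' | h' <;> omega
      exact ⟨⟨tau_concat H12 H23, Fin.lt_def.2 h31⟩, Fin.lt_def.2 h23⟩
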